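/- Let S be a bounded selfadjoint operator on a complex Hilbert space K with Sp(S) ⊆ [γ, Γ]. Then for every unit vector x, ⟨S² x, x⟩ − ⟨S x, x⟩² ≤ (1/4)(Γ − γ)². -/

import Mathlib

open scoped InnerProductSpace

theorem variance_quarter_bound
    {K : Type*} [NormedAddCommGroup K] [InnerProductSpace ℂ K] [CompleteSpace K]
    (S : K →L[ℂ] K) (hS : IsSelfAdjoint S) (γ Γ : ℝ)
    (hspec : spectrum ℝ S ⊆ Set.Icc γ Γ)
    (x : K) (hx : ‖x‖ = 1) :
    (⟪(S ∘L S) x, x⟫_ℂ).re - ((⟪S x, x⟫_ℂ).re) ^ 2 ≤ (1 / 4) * (Γ - γ) ^ 2 := by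
  set A := algebraMap ℝ (K →L[ℂ] K) Γ with hA
  set B := algebraMap ℝ (K →L[ℂ] K) γ with hB
  have hM : (0 : K →L[ℂ] K) ≤ (A - S) * (S - B) := by
    have h1 : cfc (fun t : ℝ => (Γ - t) * (t - γ)) S = (A - S) * (S - B) := by
      rw [cfc_mul _ _ S]
      congr 1
      · rw [cfc_sub _ _ S, cfc_const Γ S, cfc_id' ℝ S]
      · rw [cfc_sub _ _ S, cfc_const γ S, cfc_id' ℝ S]
    rw [← h1]
    apply cfc_nonneg
    intro t ht
    have h := hspec ht
    nlinarith [h.1, h.2]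
  have hpos := (ContinuousLinearMap.nonneg_iff_isPositive _).mp hM
  have key := hpos.inner_nonneg_left x
  have hMx : ((A - S) * (S - B)) x
      = (Γ : ℂ) • S x - (Γ : ℂ) • (γ : ℂ) • x - S (S x) + (γ : ℂ) • S x := by
    simp only [ContinuousLinearMap.mul_apply, ContinuousLinearMap.sub_apply, map_sub]
    have hAy : ∀ y : K, A y = (Γ : ℂ) • y := by
      intro y
      simp [hA, Algebra.algebraMap_eq_smul_one, Complex.coe_smul]
    have hBy : ∀ y : K, B y = (γ : ℂ) • y := by
      intro y
      simp [hB, Algebra.algebraMap_eq_smul_one, Complex.coe_smul]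
    rw [hAy, hBy, hAy, map_smul]
    abel
  have hxx : ⟪x, x⟫_ℂ = 1 := by
    rw [inner_self_eq_norm_sq_to_K, hx]; norm_num
  rw [hMx] at key
  simp only [inner_sub_left, inner_add_left, inner_smul_left, hxx, mul_one, map_sub, map_add,
    map_mul, Complex.conj_ofReal, Complex.ofReal_re, Complex.ofReal_im] at key
  simp only [RCLike.re_to_complex, Complex.re_ofReal_mul, ← Complex.ofReal_mul,
    Complex.ofReal_re] at key
  replace key := (Complex.nonneg_iff.mp key).1
  simp only [Complex.add_re, Complex.sub_re, Complex.re_ofReal_mul, Complex.ofReal_re] at key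
  have hre : (⟪(S ∘L S) x, x⟫_ℂ).re = (⟪S (S x), x⟫_ℂ).re := rfl
  rw [hre]
  set a := (⟪S x, x⟫_ℂ).re
  set b := (⟪S (S x), x⟫_ℂ).re
  nlinarith [sq_nonneg (Γ + γ - 2 * a), key]
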